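/- Positivity of the stabilised system (Lemma 2.2): There exists a constant C > 0, depending only on α_ξ and c_s, such that for all u_h ∈ V_h and λ_h ∈ Λ_h, ‖u_h‖²_{V_h} + s(λ_h, λ_h) ≤ C · ( a(u_h, u_h) + b(λ_h, u_h) − b(λ_h − ξ_h(u_h), u_h) + s(λ_h, λ_h − ξ_h(u_h)) ). -/
import Mathlib

/-- Cauchy–Schwarz for a symmetric positive semidefinite bilinear form. -/
lemma psd_cauchy_schwarz {Λh : Type*} [AddCommGroup Λh] [Module ℝ Λh]
    (s : Λh →ₗ[ℝ] Λh →ₗ[ℝ] ℝ)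
    (hs_symm : ∀ x y : Λh, s x y = s y x)
    (hs_pos : ∀ x : Λh, 0 ≤ s x x) (x y : Λh) :
    (s x y) ^ 2 ≤ s x x * s y y := by
  have h : ∀ t : ℝ, 0 ≤ s y y * (t * t) + (2 * s x y) * t + s x x := by
    intro t
    have h0 := hs_pos (x + t • y)
    simp only [map_add, map_smul, LinearMap.add_apply, LinearMap.smul_apply,
      smul_eq_mul] at h0
    rw [hs_symm y x] at h0
    ring_nf at h0 ⊢
    linarith
  have hd := discrim_le_zero h
  rw [discrim] at hd
  nlinarith [hd]

/-- **Positivity of the stabilised system (Lemma 2.2).**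
There exists a constant `C > 0` (depending only on `α_ξ` and `c_s`) such that for all
`u_h ∈ V_h` and `λ_h ∈ Λ_h`,
`‖u_h‖²_{V_h} + s(λ_h,λ_h) ≤ C (a(u_h,u_h) + b(λ_h,u_h) − b(λ_h − ξ_h(u_h),u_h)
  + s(λ_h, λ_h − ξ_h(u_h)))`. -/
theorem positivity_stabilised_system
    {Vh Λh : Type*} [NormedAddCommGroup Vh] [NormedSpace ℝ Vh]
    [AddCommGroup Λh] [Module ℝ Λh]
    -- bilinear forms
    (a : Vh →ₗ[ℝ] Vh →ₗ[ℝ] ℝ) (b : Λh →ₗ[ℝ] Vh →ₗ[ℝ] ℝ)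
    -- stabilisation form: symmetric positive semidefinite
    (s : Λh →ₗ[ℝ] Λh →ₗ[ℝ] ℝ)
    (hs_symm : ∀ x y : Λh, s x y = s y x)
    (hs_pos : ∀ x : Λh, 0 ≤ s x x)
    -- coercivity assumption
    (ξh : Vh → Λh) (αξ cs : ℝ) (hαξ : 0 < αξ) (hcs : 0 ≤ cs)
    (hcoer : ∀ u : Vh, αξ * ‖u‖ ^ 2 ≤ a u u + b (ξh u) u)
    (hξs : ∀ u : Vh, Real.sqrt (s (ξh u) (ξh u)) ≤ cs * ‖u‖)
    (hsmall : cs ^ 2 < 2 * αξ) :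
    ∃ C > 0, ∀ (u : Vh) (lam : Λh),
      ‖u‖ ^ 2 + s lam lam ≤
        C * (a u u + b lam u - b (lam - ξh u) u + s lam (lam - ξh u)) := by
  set m : ℝ := min (αξ - cs ^ 2 / 2) (1 / 2) with hm_def
  have hm : 0 < m := lt_min (by linarith) (by norm_num)
  refine ⟨m⁻¹, inv_pos.mpr hm, fun u lam => ?_⟩
  have hX : a u u + b lam u - b (lam - ξh u) u + s lam (lam - ξh u)
      = a u u + b (ξh u) u + s lam lam - s lam (ξh u) := by
    simp only [map_sub, LinearMap.sub_apply]
    ring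
  set X : ℝ := a u u + b lam u - b (lam - ξh u) u + s lam (lam - ξh u) with hX_def
  -- Cauchy–Schwarz and the bound on s(ξh u, ξh u)
  set A : ℝ := Real.sqrt (s lam lam) with hA_def
  set B : ℝ := Real.sqrt (s (ξh u) (ξh u)) with hB_def
  have hA2 : A ^ 2 = s lam lam := Real.sq_sqrt (hs_pos lam)
  have hB2 : B ^ 2 = s (ξh u) (ξh u) := Real.sq_sqrt (hs_pos (ξh u))
  have hA0 : 0 ≤ A := Real.sqrt_nonneg _
  have hB0 : 0 ≤ B := Real.sqrt_nonneg _
  have hcs1 : s lam (ξh u) ≤ A * B := by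
    have h1 : (s lam (ξh u)) ^ 2 ≤ s lam lam * s (ξh u) (ξh u) :=
      psd_cauchy_schwarz s hs_symm hs_pos lam (ξh u)
    nlinarith [h1, mul_nonneg hA0 hB0]
  have hB_le : B ≤ cs * ‖u‖ := hξs u
  have h1 := hcoer u
  have key : m * (‖u‖ ^ 2 + s lam lam) ≤ X := by
    rw [hX]
    have hAB : A * B ≤ (1 / 2) * A ^ 2 + (1 / 2) * (cs * ‖u‖) ^ 2 := by
      nlinarith [sq_nonneg (A - B), sq_nonneg B, mul_le_mul_of_nonneg_left hB_le hA0,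
        sq_nonneg (A - cs * ‖u‖)]
    have hm1 : m ≤ αξ - cs ^ 2 / 2 := min_le_left _ _
    have hm2 : m ≤ 1 / 2 := min_le_right _ _
    have hnorm : 0 ≤ ‖u‖ ^ 2 := sq_nonneg _
    nlinarith [hs_pos lam, mul_pow cs ‖u‖ 2]
  calc ‖u‖ ^ 2 + s lam lam = m⁻¹ * (m * (‖u‖ ^ 2 + s lam lam)) := by
        field_simp
    _ ≤ m⁻¹ * X := mul_le_mul_of_nonneg_left key (by positivity)
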